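/- Let P be a finite poset. In the polynomial ring K[x_p : p ∈ P][t] over a field K, define ψ(I) = t · ∏_{p ∈ max(I)} x_p for each poset ideal I. Then for all poset ideals I and J, ψ(I)·ψ(J) = ψ(I ∪ J)·ψ(I*J), where I*J is the poset ideal generated by max(I ∩ J) ∩ (max(I) ∪ max(J)). -/
import Mathlib


variable {P : Type*} [Fintype P] [PartialOrder P]

/-- The set of maximal elements of a subset `Z` of a poset. -/
def maxSet (Z : Set P) : Set P := {x | x ∈ Z ∧ ∀ y ∈ Z, x ≤ y → x = y}

/-- The poset ideal (down-set) generated by a subset `Y`. -/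
def downClosure (Y : Set P) : Set P := {x | ∃ y ∈ Y, x ≤ y}

/-- The poset ideal `I*J` generated by `max(I ∩ J) ∩ (max(I) ∪ max(J))`. -/
def idealStar (I J : Set P) : Set P :=
  downClosure (maxSet (I ∩ J) ∩ (maxSet I ∪ maxSet J))

/-- `ψ(I) = t · ∏_{p ∈ max(I)} x_p` in the polynomial ring `K[x_p : p ∈ P][t]`. -/
noncomputable def psi (K : Type*) [Field K] (I : Set P) :
    Polynomial (MvPolynomial P K) :=
  Polynomial.X *
    Polynomial.C (∏ p ∈ (Set.toFinite (maxSet I)).toFinset, MvPolynomial.X p)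

lemma maxSet_downClosure_antichain (S : Set P)
    (hS : ∀ x ∈ S, ∀ y ∈ S, x ≤ y → x = y) :
    maxSet (downClosure S) = S := by
  ext x
  constructor
  · rintro ⟨⟨y, hy, hxy⟩, hmax⟩
    have : x = y := hmax y ⟨y, hy, le_refl y⟩ hxy
    rwa [this]
  · intro hx
    refine ⟨⟨x, hx, le_refl x⟩, ?_⟩
    rintro y ⟨s, hs, hys⟩ hxy
    have hxs : x = s := hS x hx s hs (hxy.trans hys)
    exact le_antisymm hxy (hxs ▸ hys)

lemma maxSet_idealStar (I J : Set P) :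
    maxSet (idealStar I J) = (maxSet I ∩ J) ∪ (maxSet J ∩ I) := by
  rw [idealStar, maxSet_downClosure_antichain]
  · ext x
    constructor
    · rintro ⟨⟨⟨hxI, hxJ⟩, _⟩, h | h⟩
      · exact Or.inl ⟨h, hxJ⟩
      · exact Or.inr ⟨h, hxI⟩
    · rintro (⟨hmx, hxJ⟩ | ⟨hmx, hxI⟩)
      · exact ⟨⟨⟨hmx.1, hxJ⟩, fun y hy hxy => hmx.2 y hy.1 hxy⟩, Or.inl hmx⟩
      · exact ⟨⟨⟨hxI, hmx.1⟩, fun y hy hxy => hmx.2 y hy.2 hxy⟩, Or.inr hmx⟩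
  · rintro x ⟨hx, _⟩ y ⟨hy, _⟩ hxy
    exact hx.2 y hy.1 hxy

lemma maxSet_union_split (I J : Set P) (hI : IsLowerSet I) (hJ : IsLowerSet J) :
    maxSet (I ∪ J) ∪ maxSet (idealStar I J) = maxSet I ∪ maxSet J := by
  rw [maxSet_idealStar]
  ext x
  constructor
  · rintro (⟨hx | hx, hmax⟩ | ⟨hx, _⟩ | ⟨hx, _⟩)
    · exact Or.inl ⟨hx, fun y hy hxy => hmax y (Or.inl hy) hxy⟩
    · exact Or.inr ⟨hx, fun y hy hxy => hmax y (Or.inr hy) hxy⟩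
    · exact Or.inl hx
    · exact Or.inr hx
  · rintro (hx | hx)
    · by_cases h : ∀ y ∈ I ∪ J, x ≤ y → x = y
      · exact Or.inl ⟨Or.inl hx.1, h⟩
      · push_neg at h
        obtain ⟨y, hy, hxy, hne⟩ := h
        rcases hy with hy | hy
        · exact absurd (hx.2 y hy hxy) hne
        · exact Or.inr (Or.inl ⟨hx, hJ hxy hy⟩)
    · by_cases h : ∀ y ∈ I ∪ J, x ≤ y → x = y
      · exact Or.inl ⟨Or.inr hx.1, h⟩
      · push_neg at h
        obtain ⟨y, hy, hxy, hne⟩ := h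
        rcases hy with hy | hy
        · exact Or.inr (Or.inr ⟨hx, hI hxy hy⟩)
        · exact absurd (hx.2 y hy hxy) hne

lemma maxSet_inter_split (I J : Set P) :
    maxSet (I ∪ J) ∩ maxSet (idealStar I J) = maxSet I ∩ maxSet J := by
  rw [maxSet_idealStar]
  ext x
  constructor
  · rintro ⟨⟨_, hmax⟩, ⟨hmx, hxJ⟩ | ⟨hmx, hxI⟩⟩
    · exact ⟨hmx, hxJ, fun y hy hxy => hmax y (Or.inr hy) hxy⟩
    · exact ⟨⟨hxI, fun y hy hxy => hmax y (Or.inl hy) hxy⟩, hmx⟩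
  · rintro ⟨hmI, hmJ⟩
    refine ⟨⟨Or.inl hmI.1, ?_⟩, Or.inl ⟨hmI, hmJ.1⟩⟩
    rintro y (hy | hy) hxy
    · exact hmI.2 y hy hxy
    · exact hmJ.2 y hy hxy

/-- The straightening relation `ψ(I)ψ(J) = ψ(I ∪ J)ψ(I*J)` for poset ideals `I`, `J`. -/
theorem psi_straightening (K : Type*) [Field K] (I J : Set P)
    (hI : IsLowerSet I) (hJ : IsLowerSet J) :
    psi K I * psi K J = psi K (I ∪ J) * psi K (idealStar I J) := by
  classical
  unfold psi
  have key : ∀ (A B C D : Finset P), A ∪ B = C ∪ D → A ∩ B = C ∩ D →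
      (∏ p ∈ A, (MvPolynomial.X p : MvPolynomial P K)) * ∏ p ∈ B, MvPolynomial.X p =
      (∏ p ∈ C, MvPolynomial.X p) * ∏ p ∈ D, MvPolynomial.X p := by
    intro A B C D h1 h2
    rw [← Finset.prod_union_inter, h1, h2, Finset.prod_union_inter]
  have hprod := key (Set.toFinite (maxSet I)).toFinset (Set.toFinite (maxSet J)).toFinset
      (Set.toFinite (maxSet (I ∪ J))).toFinset (Set.toFinite (maxSet (idealStar I J))).toFinset
      (by
        apply Finset.coe_injective
        simp only [Finset.coe_union, Set.Finite.coe_toFinset]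
        exact (maxSet_union_split I J hI hJ).symm)
      (by
        apply Finset.coe_injective
        simp only [Finset.coe_inter, Set.Finite.coe_toFinset]
        exact (maxSet_inter_split I J).symm)
  rw [mul_mul_mul_comm, ← Polynomial.C_mul, hprod, Polynomial.C_mul, ← mul_mul_mul_comm]
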